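/- Let V be a finite set, A a set of unordered pairs of distinct elements of V, and let E be the set of 3-element subsets {u,v,w} of V such that at least 2 of the pairs {u,v},{v,w},{u,w} belong to A. Let p : V × V → [0,1] satisfy p(u,v) + p(v,u) = 1 whenever {u,v} ∈ A and p(u,v) = p(v,u) = 0 whenever {u,v} ∉ A, and let (x_v)_{v∈V} be nonnegative reals. Then ∑_{{u,v,w}∈E} (1 − p(u,v)p(u,w) − p(v,w)p(v,u) − p(w,u)p(w,v))·x_u·x_v·x_w + (1/2)·∑_{{u,v}∈A} (p(u,v)²·x_u²·x_v + p(v,u)²·x_v²·x_u) ≤ ∑_{{u,v,w}∈E} x_u·x_v·x_w + (1/2)·∑_{{u,v}∈A} (x_u²·x_v + x_v²·x_u) − (1/2)·∑_{u∈V} x_u·(∑_{v : {u,v}∈A} p(u,v)·x_v)². -/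

import Mathlib

open Finset

lemma pair_eq_pair_iff' {V : Type*} [DecidableEq V] {a b u v : V} (huv : u ≠ v) :
    ({a, b} : Finset V) = {u, v} ↔ (a = u ∧ b = v) ∨ (a = v ∧ b = u) := by
  constructor
  · intro h
    have hab : a ≠ b := by
      rintro rfl
      have hu : u ∈ ({a, a} : Finset V) := h ▸ mem_insert_self u {v}
      have hv : v ∈ ({a, a} : Finset V) := h ▸ mem_insert_of_mem (mem_singleton_self v)
      simp only [mem_insert, mem_singleton, or_self] at hu hv
      subst hu; exact huv hv.symm
    have ha : a ∈ ({u, v} : Finset V) := h ▸ mem_insert_self a {b}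
    have hb : b ∈ ({u, v} : Finset V) := h ▸ mem_insert_of_mem (mem_singleton_self b)
    simp only [mem_insert, mem_singleton] at ha hb
    rcases ha with rfl | rfl <;> rcases hb with rfl | rfl <;> tauto
  · rintro (⟨rfl, rfl⟩ | ⟨rfl, rfl⟩)
    · rfl
    · exact pair_comm a b

lemma sum_pair_erase {V : Type*} [DecidableEq V] {u v : V} (huv : u ≠ v) (g : V → V → ℝ) :
    ∑ a ∈ ({u, v} : Finset V), ∑ b ∈ ({u, v} : Finset V).erase a, g a b = g u v + g v u := by
  have e1 : ({u, v} : Finset V).erase u = {v} := Finset.erase_insert (by simp [huv])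
  have e2 : ({u, v} : Finset V).erase v = {u} := by
    rw [Finset.erase_insert_of_ne huv]; simp
  rw [Finset.sum_pair huv, e1, e2, Finset.sum_singleton, Finset.sum_singleton]

lemma sum_A_pairs {V : Type*} [Fintype V] [DecidableEq V] (A : Finset (Finset V))
    (hA : ∀ e ∈ A, e.card = 2) (g : V → V → ℝ)
    (hg : ∀ a b, ({a, b} : Finset V) ∉ A → g a b = 0) :
    ∑ a, ∑ b, g a b = ∑ e ∈ A, ∑ a ∈ e, ∑ b ∈ e.erase a, g a b := by
  have h1 : ∑ a, ∑ b, g a b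
      = ∑ q ∈ (univ ×ˢ univ : Finset (V × V)).filter (fun q => ({q.1, q.2} : Finset V) ∈ A),
          g q.1 q.2 := by
    rw [← Finset.sum_product', Finset.sum_filter]
    refine Finset.sum_congr rfl fun q _ => ?_
    split_ifs with h
    · rfl
    · exact hg q.1 q.2 h
  rw [h1, ← Finset.sum_fiberwise_of_maps_to (t := A)
    (g := fun q : V × V => ({q.1, q.2} : Finset V)) (fun q hq => (mem_filter.mp hq).2)
    (fun q => g q.1 q.2)]
  refine Finset.sum_congr rfl fun e he => ?_
  obtain ⟨u, v, huv, rfl⟩ := Finset.card_eq_two.mp (hA e he)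
  have hfib : ((univ ×ˢ univ : Finset (V × V)).filter
        (fun q => ({q.1, q.2} : Finset V) ∈ A)).filter
      (fun q => ({q.1, q.2} : Finset V) = {u, v}) = {(u, v), (v, u)} := by
    ext ⟨a, b⟩
    simp only [mem_filter, mem_product, mem_univ, true_and, mem_insert, mem_singleton,
      Prod.mk.injEq]
    rw [pair_eq_pair_iff' huv]
    constructor
    · rintro ⟨_, h⟩; exact h
    · rintro (⟨rfl, rfl⟩ | ⟨rfl, rfl⟩)
      · exact ⟨he, Or.inl ⟨rfl, rfl⟩⟩
      · exact ⟨by rwa [pair_comm], Or.inr ⟨rfl, rfl⟩⟩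
  rw [hfib, Finset.sum_pair (by simp [huv]), sum_pair_erase huv]

/-- The 3-graph associated with a graph `A` on `V`: all 3-element subsets `t` of `V` such that
at least 2 of the three pairs inside `t` belong to `A`. -/
def triEdges {V : Type*} [Fintype V] [DecidableEq V] (A : Finset (Finset V)) :
    Finset (Finset V) :=
  Finset.univ.filter fun t : Finset V =>
    t.card = 3 ∧ 2 ≤ ((t.powersetCard 2).filter (· ∈ A)).card

lemma triple_fiber {V : Type*} [Fintype V] [DecidableEq V] {u v w : V}
    (huv : u ≠ v) (huw : u ≠ w) (hvw : v ≠ w) :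
    ((univ ×ˢ univ ×ˢ univ : Finset (V × V × V)).filter
        (fun q => q.1 ≠ q.2.1 ∧ q.1 ≠ q.2.2 ∧ q.2.1 ≠ q.2.2)).filter
      (fun q => ({q.1, q.2.1, q.2.2} : Finset V) = {u, v, w})
    = {(u,v,w), (u,w,v), (v,u,w), (v,w,u), (w,u,v), (w,v,u)} := by
  ext ⟨a, b, c⟩
  simp only [mem_filter, mem_product, mem_univ, true_and, mem_insert, mem_singleton,
    Prod.mk.injEq]
  constructor
  · rintro ⟨⟨hab, hac, hbc⟩, h⟩
    have ha : a ∈ ({u, v, w} : Finset V) := h ▸ mem_insert_self a {b, c}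
    have hb : b ∈ ({u, v, w} : Finset V) := h ▸ mem_insert_of_mem (mem_insert_self b {c})
    have hc : c ∈ ({u, v, w} : Finset V) := h ▸
      mem_insert_of_mem (mem_insert_of_mem (mem_singleton_self c))
    simp only [mem_insert, mem_singleton] at ha hb hc
    rcases ha with rfl | rfl | rfl <;> rcases hb with rfl | rfl | rfl <;>
      rcases hc with rfl | rfl | rfl <;> simp_all
  · rintro (⟨rfl, rfl, rfl⟩ | ⟨rfl, rfl, rfl⟩ | ⟨rfl, rfl, rfl⟩ | ⟨rfl, rfl, rfl⟩ |
      ⟨rfl, rfl, rfl⟩ | ⟨rfl, rfl, rfl⟩) <;>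
      refine ⟨⟨?_, ?_, ?_⟩, ?_⟩ <;>
      first
        | exact huv | exact huw | exact hvw
        | exact huv.symm | exact huw.symm | exact hvw.symm
        | (ext z; simp; try tauto)

lemma mem_triEdges_of_cherry {V : Type*} [Fintype V] [DecidableEq V] {A : Finset (Finset V)}
    {a b c : V} (hab : a ≠ b) (hac : a ≠ c) (hbc : b ≠ c)
    (h1 : ({a, b} : Finset V) ∈ A) (h2 : ({a, c} : Finset V) ∈ A) :
    ({a, b, c} : Finset V) ∈ triEdges A := by
  simp only [triEdges, mem_filter, mem_univ, true_and]
  refine ⟨Finset.card_eq_three.mpr ⟨a, b, c, hab, hac, hbc, rfl⟩, ?_⟩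
  have hne : ({a, b} : Finset V) ≠ {a, c} := by
    intro h
    have : c ∈ ({a, b} : Finset V) := by rw [h]; simp
    simp only [mem_insert, mem_singleton] at this
    rcases this with rfl | rfl
    · exact hac rfl
    · exact hbc rfl
  have hsub : ({ ({a, b} : Finset V), {a, c} } : Finset (Finset V))
      ⊆ ((({a, b, c} : Finset V).powersetCard 2).filter (· ∈ A)) := by
    intro s hs
    simp only [mem_insert, mem_singleton] at hs
    rcases hs with rfl | rfl <;> rw [mem_filter, Finset.mem_powersetCard] <;>
      refine ⟨⟨?_, ?_⟩, by assumption⟩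
    · intro z hz; simp only [mem_insert, mem_singleton] at hz ⊢; tauto
    · exact Finset.card_pair hab
    · intro z hz; simp only [mem_insert, mem_singleton] at hz ⊢; tauto
    · exact Finset.card_pair hac
  calc 2 = ({ ({a, b} : Finset V), {a, c} } : Finset (Finset V)).card :=
        (Finset.card_pair hne).symm
    _ ≤ _ := Finset.card_le_card hsub

lemma sum_A_triples {V : Type*} [Fintype V] [DecidableEq V] (A : Finset (Finset V))
    (p : V × V → ℝ)
    (hPz : ∀ a b : V, ({a, b} : Finset V) ∉ A → p (a, b) = 0) (x : V → ℝ) :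
    ∑ q ∈ ((univ ×ˢ univ ×ˢ univ : Finset (V × V × V)).filter
        (fun q => q.1 ≠ q.2.1 ∧ q.1 ≠ q.2.2 ∧ q.2.1 ≠ q.2.2)),
      p (q.1, q.2.1) * p (q.1, q.2.2) * x q.1 * x q.2.1 * x q.2.2
    = 2 * ∑ t ∈ triEdges A, (∑ a ∈ t, ∏ b ∈ t.erase a, p (a, b)) * ∏ v ∈ t, x v := by
  set S3 : Finset (V × V × V) := (univ ×ˢ univ ×ˢ univ : Finset (V × V × V)).filter
      (fun q => q.1 ≠ q.2.1 ∧ q.1 ≠ q.2.2 ∧ q.2.1 ≠ q.2.2) with hS3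
  set f : V × V × V → ℝ := fun q => p (q.1, q.2.1) * p (q.1, q.2.2) * x q.1 * x q.2.1 * x q.2.2
    with hf
  have hmaps : ∀ q ∈ S3, ({q.1, q.2.1, q.2.2} : Finset V)
      ∈ univ.filter (fun t : Finset V => t.card = 3) := by
    rintro ⟨a, b, c⟩ hq
    rw [hS3, mem_filter] at hq
    obtain ⟨-, hab, hac, hbc⟩ := hq
    simp only [mem_filter, mem_univ, true_and]
    exact Finset.card_eq_three.mpr ⟨a, b, c, hab, hac, hbc, rfl⟩
  rw [← Finset.sum_fiberwise_of_maps_to hmaps f]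
  have hF : ∀ t ∈ univ.filter (fun t : Finset V => t.card = 3),
      ∑ q ∈ S3.filter (fun q => ({q.1, q.2.1, q.2.2} : Finset V) = t), f q
      = if t ∈ triEdges A then 2 * ((∑ a ∈ t, ∏ b ∈ t.erase a, p (a, b)) * ∏ v ∈ t, x v)
        else 0 := by
    intro t ht
    simp only [mem_filter, mem_univ, true_and] at ht
    obtain ⟨u, v, w, huv, huw, hvw, rfl⟩ := Finset.card_eq_three.mp ht
    by_cases htE : ({u, v, w} : Finset V) ∈ triEdges A
    · rw [if_pos htE, hS3, triple_fiber huv huw hvw]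
      have n1 : ((u, v, w) : V × V × V) ∉ ({(u,w,v), (v,u,w), (v,w,u), (w,u,v), (w,v,u)} :
          Finset (V × V × V)) := by
        simp [Prod.ext_iff, huv, huw, hvw, huv.symm, huw.symm, hvw.symm]
      have n2 : ((u, w, v) : V × V × V) ∉ ({(v,u,w), (v,w,u), (w,u,v), (w,v,u)} :
          Finset (V × V × V)) := by
        simp [Prod.ext_iff, huv, huw, hvw, huv.symm, huw.symm, hvw.symm]
      have n3 : ((v, u, w) : V × V × V) ∉ ({(v,w,u), (w,u,v), (w,v,u)} :
          Finset (V × V × V)) := by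
        simp [Prod.ext_iff, huv, huw, hvw, huv.symm, huw.symm, hvw.symm]
      have n4 : ((v, w, u) : V × V × V) ∉ ({(w,u,v), (w,v,u)} : Finset (V × V × V)) := by
        simp [Prod.ext_iff, huv, huw, hvw, huv.symm, huw.symm, hvw.symm]
      have n5 : ((w, u, v) : V × V × V) ∉ ({(w,v,u)} : Finset (V × V × V)) := by
        simp [Prod.ext_iff, huv, huw, hvw, huv.symm, huw.symm, hvw.symm]
      rw [Finset.sum_insert n1, Finset.sum_insert n2, Finset.sum_insert n3,
        Finset.sum_insert n4, Finset.sum_insert n5, Finset.sum_singleton]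
      have hu_nm : u ∉ ({v, w} : Finset V) := by simp [huv, huw]
      have hv_nm : v ∉ ({w} : Finset V) := by simp [hvw]
      have E1 : ({u, v, w} : Finset V).erase u = {v, w} := Finset.erase_insert hu_nm
      have E2 : ({u, v, w} : Finset V).erase v = {u, w} := by
        rw [Finset.erase_insert_of_ne huv, Finset.erase_insert hv_nm]
      have E3 : ({u, v, w} : Finset V).erase w = {u, v} := by
        rw [Finset.erase_insert_of_ne huw, Finset.erase_insert_of_ne hvw]
        simp
      rw [Finset.sum_insert hu_nm, Finset.sum_insert hv_nm, Finset.sum_singleton,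
        Finset.prod_insert hu_nm, Finset.prod_insert hv_nm, Finset.prod_singleton,
        E1, E2, E3, Finset.prod_pair hvw, Finset.prod_pair huw, Finset.prod_pair huv]
      simp only [hf]
      ring
    · rw [if_neg htE]
      apply Finset.sum_eq_zero
      rintro ⟨a, b, c⟩ hq
      rw [mem_filter, hS3, mem_filter] at hq
      obtain ⟨⟨-, hab, hac, hbc⟩, hset⟩ := hq
      simp only [hf]
      by_cases h1 : ({a, b} : Finset V) ∈ A
      · by_cases h2 : ({a, c} : Finset V) ∈ A
        · exact absurd (hset ▸ mem_triEdges_of_cherry hab hac hbc h1 h2) htE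
        · rw [hPz a c h2]; ring
      · rw [hPz a b h1]; ring
  rw [Finset.sum_congr rfl hF, ← Finset.sum_filter]
  have hCE : (univ.filter (fun t : Finset V => t.card = 3)).filter (· ∈ triEdges A)
      = triEdges A := by
    ext t
    simp only [mem_filter, mem_univ, true_and, triEdges]
    tauto
  rw [hCE, Finset.mul_sum]

/-- Let `A` be a set of unordered pairs of distinct elements of `V`, `E` the set of 3-element
subsets of `V` at least 2 of whose pairs lie in `A`, and `p : V × V → [0,1]` with
`p (u,v) + p (v,u) = 1` on pairs of `A` and `p (u,v) = p (v,u) = 0` otherwise. Then for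
nonnegative reals `x`,
`∑_{{u,v,w}∈E} (1 − p(u,v)p(u,w) − p(v,w)p(v,u) − p(w,u)p(w,v))·x_u·x_v·x_w
  + (1/2)·∑_{{u,v}∈A} (p(u,v)²·x_u²·x_v + p(v,u)²·x_v²·x_u)
≤ ∑_{{u,v,w}∈E} x_u·x_v·x_w + (1/2)·∑_{{u,v}∈A} (x_u²·x_v + x_v²·x_u)
  − (1/2)·∑_{u∈V} x_u·(∑_{v : {u,v}∈A} p(u,v)·x_v)²`. -/
theorem stmt_13 {V : Type*} [Fintype V] [DecidableEq V] (A : Finset (Finset V))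
    (hA : ∀ e ∈ A, e.card = 2) (p : V × V → ℝ)
    (hp01 : ∀ q : V × V, 0 ≤ p q ∧ p q ≤ 1)
    (hp1 : ∀ u v : V, ({u, v} : Finset V) ∈ A → p (u, v) + p (v, u) = 1)
    (hp0 : ∀ u v : V, ({u, v} : Finset V) ∉ A → p (u, v) = 0 ∧ p (v, u) = 0)
    (x : V → ℝ) (hx : ∀ v, 0 ≤ x v) :
    (∑ t ∈ triEdges A, (1 - ∑ a ∈ t, ∏ b ∈ t.erase a, p (a, b)) * ∏ v ∈ t, x v)
      + (1 / 2) * ∑ e ∈ A, ∑ a ∈ e, ∑ b ∈ e.erase a, p (a, b) ^ 2 * x a ^ 2 * x b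
    ≤ (∑ t ∈ triEdges A, ∏ v ∈ t, x v)
      + (1 / 2) * ∑ e ∈ A, ∑ a ∈ e, ∑ b ∈ e.erase a, x a ^ 2 * x b
      - (1 / 2) * ∑ u, x u *
          (∑ v ∈ Finset.univ.filter (fun v => ({u, v} : Finset V) ∈ A), p (u, v) * x v) ^ 2 := by
  classical
  have hPz : ∀ a b : V, ({a, b} : Finset V) ∉ A → p (a, b) = 0 := fun a b h => (hp0 a b h).1
  have hPd : ∀ a : V, p (a, a) = 0 := by
    intro a
    refine hPz a a fun h => ?_
    have := hA _ h
    simp at this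
  -- Step 1: expand the first sum on the left.
  have h1 : ∑ t ∈ triEdges A, (1 - ∑ a ∈ t, ∏ b ∈ t.erase a, p (a, b)) * ∏ v ∈ t, x v
      = (∑ t ∈ triEdges A, ∏ v ∈ t, x v)
        - ∑ t ∈ triEdges A, (∑ a ∈ t, ∏ b ∈ t.erase a, p (a, b)) * ∏ v ∈ t, x v := by
    rw [← Finset.sum_sub_distrib]
    exact Finset.sum_congr rfl fun t _ => by ring
  -- Step 2: the key identity for the quadratic sum.
  have hQ : ∑ u, x u *
        (∑ v ∈ Finset.univ.filter (fun v => ({u, v} : Finset V) ∈ A), p (u, v) * x v) ^ 2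
      = (∑ e ∈ A, ∑ a ∈ e, ∑ b ∈ e.erase a, p (a, b) ^ 2 * x a * x b ^ 2)
        + 2 * ∑ t ∈ triEdges A, (∑ a ∈ t, ∏ b ∈ t.erase a, p (a, b)) * ∏ v ∈ t, x v := by
    have hS : ∀ u : V, (∑ v ∈ Finset.univ.filter (fun v => ({u, v} : Finset V) ∈ A),
        p (u, v) * x v) = ∑ v, p (u, v) * x v := by
      intro u
      rw [Finset.sum_filter]
      refine Finset.sum_congr rfl fun v _ => ?_
      split_ifs with h
      · rfl
      · rw [hPz u v h]; ring
    calc ∑ u, x u *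
          (∑ v ∈ Finset.univ.filter (fun v => ({u, v} : Finset V) ∈ A), p (u, v) * x v) ^ 2
        = ∑ u, ∑ v, ∑ w, p (u, v) * p (u, w) * x u * x v * x w := by
          refine Finset.sum_congr rfl fun u _ => ?_
          rw [hS u, sq, Finset.sum_mul_sum, Finset.mul_sum]
          refine Finset.sum_congr rfl fun v _ => ?_
          rw [Finset.mul_sum]
          refine Finset.sum_congr rfl fun w _ => ?_
          ring
      _ = (∑ u, ∑ v, p (u, v) ^ 2 * x u * x v ^ 2)
          + ∑ u, ∑ v, ∑ w ∈ univ.erase v, p (u, v) * p (u, w) * x u * x v * x w := by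
          rw [← Finset.sum_add_distrib]
          refine Finset.sum_congr rfl fun u _ => ?_
          rw [← Finset.sum_add_distrib]
          refine Finset.sum_congr rfl fun v _ => ?_
          rw [← Finset.add_sum_erase _ _ (mem_univ v)]
          congr 1
          ring
      _ = (∑ e ∈ A, ∑ a ∈ e, ∑ b ∈ e.erase a, p (a, b) ^ 2 * x a * x b ^ 2)
          + 2 * ∑ t ∈ triEdges A, (∑ a ∈ t, ∏ b ∈ t.erase a, p (a, b)) * ∏ v ∈ t, x v := by
          congr 1
          · exact sum_A_pairs A hA _ (fun a b h => by rw [hPz a b h]; ring)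
          · rw [← sum_A_triples A p hPz x]
            -- turn the iterated sum into a sum over the filtered product set
            have step1 : ∀ u v : V, ∑ w ∈ univ.erase v, p (u, v) * p (u, w) * x u * x v * x w
                = ∑ w, if w ≠ v then p (u, v) * p (u, w) * x u * x v * x w else 0 := by
              intro u v
              rw [← Finset.sum_filter, Finset.filter_ne']
            have step2 : ∑ u, ∑ v, ∑ w ∈ univ.erase v,
                  p (u, v) * p (u, w) * x u * x v * x w
                = ∑ q ∈ ((univ ×ˢ univ ×ˢ univ : Finset (V × V × V)).filter
                    (fun q => q.2.2 ≠ q.2.1)),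
                  p (q.1, q.2.1) * p (q.1, q.2.2) * x q.1 * x q.2.1 * x q.2.2 := by
              rw [Finset.sum_filter]
              simp only [Finset.sum_product]
              refine Finset.sum_congr rfl fun u _ => Finset.sum_congr rfl fun v _ => ?_
              rw [step1 u v]
            rw [step2]
            have hsub : ((univ ×ˢ univ ×ˢ univ : Finset (V × V × V)).filter
                  (fun q => q.1 ≠ q.2.1 ∧ q.1 ≠ q.2.2 ∧ q.2.1 ≠ q.2.2))
                ⊆ ((univ ×ˢ univ ×ˢ univ : Finset (V × V × V)).filter
                  (fun q => q.2.2 ≠ q.2.1)) := by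
              rintro ⟨a, b, c⟩ hq
              rw [mem_filter] at hq ⊢
              exact ⟨hq.1, hq.2.2.2.symm⟩
            have h0 : ∀ q ∈ ((univ ×ˢ univ ×ˢ univ : Finset (V × V × V)).filter
                  (fun q => q.2.2 ≠ q.2.1)),
                q ∉ ((univ ×ˢ univ ×ˢ univ : Finset (V × V × V)).filter
                  (fun q => q.1 ≠ q.2.1 ∧ q.1 ≠ q.2.2 ∧ q.2.1 ≠ q.2.2)) →
                p (q.1, q.2.1) * p (q.1, q.2.2) * x q.1 * x q.2.1 * x q.2.2 = 0 := by
              rintro ⟨a, b, c⟩ hq hq'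
              rw [mem_filter] at hq
              dsimp only
              by_cases hab : a = b
              · subst hab; rw [hPd]; ring
              · by_cases hac : a = c
                · subst hac; rw [hPd]; ring
                · exact absurd (mem_filter.mpr ⟨hq.1, hab, hac, hq.2.symm⟩) hq'
            exact (Finset.sum_subset hsub h0).symm
  -- Step 3: the per-edge inequality.
  have hfinal : (∑ e ∈ A, ∑ a ∈ e, ∑ b ∈ e.erase a, p (a, b) ^ 2 * x a * x b ^ 2)
      + (∑ e ∈ A, ∑ a ∈ e, ∑ b ∈ e.erase a, p (a, b) ^ 2 * x a ^ 2 * x b)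
      ≤ ∑ e ∈ A, ∑ a ∈ e, ∑ b ∈ e.erase a, x a ^ 2 * x b := by
    rw [← Finset.sum_add_distrib]
    refine Finset.sum_le_sum fun e he => ?_
    obtain ⟨u, v, huv, rfl⟩ := Finset.card_eq_two.mp (hA e he)
    rw [sum_pair_erase huv, sum_pair_erase huv, sum_pair_erase huv]
    have h1uv := hp1 u v he
    have h01a := hp01 (u, v)
    have h01b := hp01 (v, u)
    have hsq : (p (u, v) + p (v, u)) ^ 2 = 1 := by rw [h1uv]; norm_num
    nlinarith [hsq,
      mul_nonneg (mul_nonneg h01a.1 h01b.1)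
        (mul_nonneg (mul_nonneg (hx u) (hx v)) (hx v)),
      mul_nonneg (mul_nonneg h01a.1 h01b.1)
        (mul_nonneg (mul_nonneg (hx u) (hx u)) (hx v)),
      mul_nonneg (hx u) (mul_nonneg (hx v) (hx v)),
      mul_nonneg (hx u) (mul_nonneg (hx u) (hx v))]
  rw [h1, hQ]
  linarith [hfinal]
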